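/- Let ϑ(ξ,η) = (c₁η − c₂, c₃ − c₁ξ) with c₁ ≠ 0. The linear map n ↦ rot(n ϑ) = (c₃ − c₁ξ) n_ξ + (c₂ − c₁η) n_η − 2c₁ n from P^p(ℝ²) to P^p(ℝ²) is injective; equivalently, rot(∑ᵢ cᵢ nᵢ ϑ) = 0 for a basis {nᵢ} of P^p implies all cᵢ = 0. -/

import Mathlib

open MvPolynomial

/-- The scalar curl of `n·ϑ` for the template vector field
`ϑ(ξ,η) = (c₁η - c₂, c₃ - c₁ξ)`:
`rot(nϑ) = (c₃ - c₁ξ) n_ξ + (c₂ - c₁η) n_η - 2c₁ n`. -/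
noncomputable def rotTemplate (c₁ c₂ c₃ : ℝ) (n : MvPolynomial (Fin 2) ℝ) :
    MvPolynomial (Fin 2) ℝ :=
  (C c₃ - C c₁ * X 0) * pderiv 0 n + (C c₂ - C c₁ * X 1) * pderiv 1 n - C (2 * c₁) * n

lemma coeff_pderiv' {σ : Type*} [DecidableEq σ] (i : σ) (m : σ →₀ ℕ)
    (n : MvPolynomial σ ℝ) :
    coeff m (pderiv i n) = (m i + 1 : ℝ) * coeff (m + Finsupp.single i 1) n := by
  induction n using MvPolynomial.induction_on' with
  | monomial s a =>
    rw [pderiv_monomial]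
    simp only [coeff_monomial]
    by_cases h : s i = 0
    · have h1 : s - Finsupp.single i 1 = s := by
        ext j
        by_cases hj : j = i
        · subst hj; simp [Finsupp.tsub_apply, h]
        · simp [Finsupp.tsub_apply, Finsupp.single_apply, Ne.symm hj]
      have h2 : s ≠ m + Finsupp.single i 1 := by
        intro he
        apply_fun (fun f => f i) at he
        simp at he
        omega
      rw [h1]
      simp [h2, h]
    · have hiff : s - Finsupp.single i 1 = m ↔ s = m + Finsupp.single i 1 := by
        rw [Finsupp.ext_iff, Finsupp.ext_iff]
        constructor <;> intro H j <;> have Hj := H j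
        all_goals
          by_cases hj : j = i
          · subst hj
            simp [Finsupp.tsub_apply, Finsupp.single_apply] at Hj ⊢
            omega
          · simp [Finsupp.tsub_apply, Finsupp.single_apply, Ne.symm hj] at Hj ⊢
            omega
      by_cases he : s - Finsupp.single i 1 = m
      · have he2 : s = m + Finsupp.single i 1 := hiff.mp he
        have hsi : s i = m i + 1 := by rw [he2]; simp
        rw [if_pos he, if_pos he2, hsi]
        push_cast
        ring
      · simp [he, (hiff.not).mp he]
  | add f g hf hg =>
    simp only [map_add, coeff_add, hf, hg]
    ring

lemma coeff_X_mul_pderiv' {σ : Type*} [DecidableEq σ] (i : σ) (m : σ →₀ ℕ)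
    (n : MvPolynomial σ ℝ) :
    coeff m (X i * pderiv i n) = (m i : ℝ) * coeff m n := by
  rw [coeff_X_mul']
  by_cases h : i ∈ m.support
  · rw [if_pos h, coeff_pderiv']
    have hmi : m i ≠ 0 := Finsupp.mem_support_iff.mp h
    have h1 : m - Finsupp.single i 1 + Finsupp.single i 1 = m :=
      tsub_add_cancel_of_le (Finsupp.single_le_iff.mpr (Nat.one_le_iff_ne_zero.mpr hmi))
    have h2 : ((m - Finsupp.single i 1 : σ →₀ ℕ)) i + 1 = m i := by
      rw [Finsupp.tsub_apply]
      simp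
      omega
    rw [h1]
    congr 1
    exact_mod_cast congrArg (Nat.cast (R := ℝ)) h2
  · rw [if_neg h]
    have : m i = 0 := Finsupp.notMem_support_iff.mp h
    simp [this]

/-- For `ϑ(ξ,η) = (c₁η - c₂, c₃ - c₁ξ)` with `c₁ ≠ 0`, the linear map
`n ↦ rot(nϑ)` on bivariate polynomials of total degree at most `p` is injective:
`rot(nϑ) = 0` implies `n = 0`. -/
theorem rotTemplate_injective (c₁ c₂ c₃ : ℝ) (hc₁ : c₁ ≠ 0) (p : ℕ) :
    ∀ n : MvPolynomial (Fin 2) ℝ, n.totalDegree ≤ p →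
      rotTemplate c₁ c₂ c₃ n = 0 → n = 0 := by
  intro n _ h0
  by_contra hn
  have hsup : n.support.Nonempty := MvPolynomial.support_nonempty.mpr hn
  obtain ⟨m, hm, hdm⟩ := Finset.exists_mem_eq_sup n.support hsup
    (fun s => s.sum fun _ e => e)
  have hdm' : n.totalDegree = m.sum fun _ e => e := hdm
  -- coefficient of the higher-degree monomials m + e_i vanishes
  have hhigh : ∀ i : Fin 2, coeff (m + Finsupp.single i 1) n = 0 := by
    intro i
    apply coeff_eq_zero_of_totalDegree_lt
    have hs : ((m + Finsupp.single i 1).sum fun _ e => e)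
        = (m.sum fun _ e => e) + 1 := by
      rw [Finsupp.sum_add_index (by simp) (by intros; rfl)]
      simp
    show n.totalDegree < (m + Finsupp.single i 1).sum fun _ e => e
    rw [hs, ← hdm']
    omega
  have hcm : coeff m n ≠ 0 := MvPolynomial.mem_support_iff.mp hm
  have key : coeff m (rotTemplate c₁ c₂ c₃ n) =
      (-(c₁ * (m 0 : ℝ)) - c₁ * (m 1 : ℝ) - 2 * c₁) * coeff m n := by
    unfold rotTemplate
    simp only [sub_mul, mul_assoc, coeff_sub, coeff_add, coeff_C_mul,
      coeff_X_mul_pderiv', coeff_pderiv', hhigh 0, hhigh 1]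
    ring
  rw [h0, coeff_zero] at key
  have hfac : (-(c₁ * (m 0 : ℝ)) - c₁ * (m 1 : ℝ) - 2 * c₁) ≠ 0 := by
    intro h
    apply hc₁
    have h2 : c₁ * ((m 0 : ℝ) + (m 1 : ℝ) + 2) = 0 := by linarith
    rcases mul_eq_zero.mp h2 with h' | h'
    · exact h'
    · exfalso
      have hpos : (0:ℝ) < (m 0 : ℝ) + (m 1 : ℝ) + 2 := by positivity
      linarith
  rcases mul_eq_zero.mp key.symm with h' | h'
  · exact hfac h'
  · exact hcm h'
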